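/- Let B be a bicategory and W a class of 1-morphisms satisfying [WB1]–[WB5]. Suppose a : B → A and b : C → B are 1-morphisms such that both a ∈ W and a ∘ b ∈ W. Then there exists a 1-morphism c : D → C such that b ∘ c ∈ W. -/

import Mathlib

open CategoryTheory Bicategory

universe w v u

/-- A class of 1-morphisms in a bicategory. -/
def WClass (B : Type u) [Bicategory.{w, v} B] :=
  ∀ ⦃a b : B⦄, (a ⟶ b) → Prop

namespace WClass

variable {B : Type u} [Bicategory.{w, v} B]

/-- [WB1]: all identities are in `W`. -/
def WB1 (W : WClass B) : Prop := ∀ a : B, W (𝟙 a)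

/-- [WB2]: for composable arrows of `W` there is a pre-composition landing in `W`. -/
def WB2 (W : WClass B) : Prop :=
  ∀ ⦃a b c : B⦄ (vm : a ⟶ b) (wm : b ⟶ c), W vm → W wm →
    ∃ (a' : B) (u : a' ⟶ a), W (u ≫ vm ≫ wm)

/-- [WB3]: squares with invertible fillers over cospans with one leg in `W`. -/
def WB3 (W : WClass B) : Prop :=
  ∀ ⦃a b c : B⦄ (wm : a ⟶ b) (f : c ⟶ b), W wm →
    ∃ (d : B) (h : d ⟶ a) (vm : d ⟶ c), W vm ∧ Nonempty (h ≫ wm ≅ vm ≫ f)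

/-- `β` is a lifting of the 2-cell `η : f ≫ wm ⟶ g ≫ wm` along `wm`, via `u`. -/
def IsLift ⦃a b c : B⦄ (f g : a ⟶ b) (wm : b ⟶ c) (η : f ≫ wm ⟶ g ≫ wm)
    ⦃a' : B⦄ (u : a' ⟶ a) (β : u ≫ f ⟶ u ≫ g) : Prop :=
  β ▷ wm = (α_ u f wm).hom ≫ u ◁ η ≫ (α_ u g wm).inv

/-- [WB4]: existence of liftings of 2-cells along arrows of `W`, together with
the compatibility of any two such liftings. -/
def WB4 (W : WClass B) : Prop :=
  (∀ ⦃a b c : B⦄ (f g : a ⟶ b) (wm : b ⟶ c), W wm → ∀ η : f ≫ wm ⟶ g ≫ wm,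
    ∃ (a' : B) (u : a' ⟶ a), W u ∧ ∃ β : u ≫ f ⟶ u ≫ g, IsLift f g wm η u β) ∧
  (∀ ⦃a b c : B⦄ (f g : a ⟶ b) (wm : b ⟶ c), W wm → ∀ η : f ≫ wm ⟶ g ≫ wm,
    ∀ ⦃a₁ : B⦄ (u₁ : a₁ ⟶ a) (β₁ : u₁ ≫ f ⟶ u₁ ≫ g), W u₁ → IsLift f g wm η u₁ β₁ →
      ∀ ⦃a₂ : B⦄ (u₂ : a₂ ⟶ a) (β₂ : u₂ ≫ f ⟶ u₂ ≫ g), W u₂ → IsLift f g wm η u₂ β₂ →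
        ∃ (d : B) (s : d ⟶ a₁) (t : d ⟶ a₂), W (s ≫ u₁) ∧ W (t ≫ u₂) ∧
          ∃ ε₀ : s ≫ u₁ ≅ t ≫ u₂,
            ((α_ s u₁ f).hom ≫ s ◁ β₁ ≫ (α_ s u₁ g).inv) ≫ ε₀.hom ▷ g =
              ε₀.hom ▷ f ≫ (α_ t u₂ f).hom ≫ t ◁ β₂ ≫ (α_ t u₂ g).inv)

/-- [WB5]: `W` is closed under invertible 2-cells. -/
def WB5 (W : WClass B) : Prop :=
  ∀ ⦃a b : B⦄ (vm wm : a ⟶ b), W wm → Nonempty (vm ≅ wm) → W vm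

end WClass

namespace WClass

variable {B : Type u} [Bicategory.{w, v} B]

/-- Refinement of a 2-cell `β : u ≫ f ⟶ u ≫ g` along `m`. -/
def refCell {x y z c : B} (m : x ⟶ y) (u : y ⟶ z) {f g : z ⟶ c}
    (β : u ≫ f ⟶ u ≫ g) : (m ≫ u) ≫ f ⟶ (m ≫ u) ≫ g :=
  (α_ m u f).hom ≫ m ◁ β ≫ (α_ m u g).inv

/-- Transport of a 2-cell along an invertible 2-cell `ε : u' ≅ u`. -/
def transCell {y z c : B} {u' u : y ⟶ z} (ε₀ : u' ≅ u) {f g : z ⟶ c}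
    (β : u ≫ f ⟶ u ≫ g) : u' ≫ f ⟶ u' ≫ g :=
  ε₀.hom ▷ f ≫ β ≫ ε₀.inv ▷ g

lemma refCell_comp {x y z c : B} (m : x ⟶ y) (u : y ⟶ z) {f g k : z ⟶ c}
    (β : u ≫ f ⟶ u ≫ g) (β' : u ≫ g ⟶ u ≫ k) :
    refCell m u (β ≫ β') = refCell m u β ≫ refCell m u β' := by
  simp [refCell]

lemma refCell_id {x y z c : B} (m : x ⟶ y) (u : y ⟶ z) {f : z ⟶ c} :
    refCell m u (𝟙 (u ≫ f)) = 𝟙 ((m ≫ u) ≫ f) := by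
  simp [refCell]

lemma transCell_comp {y z c : B} {u' u : y ⟶ z} (ε₀ : u' ≅ u) {f g k : z ⟶ c}
    (β : u ≫ f ⟶ u ≫ g) (β' : u ≫ g ⟶ u ≫ k) :
    transCell ε₀ β ≫ transCell ε₀ β' = transCell ε₀ (β ≫ β') := by
  simp [transCell, ← comp_whiskerRight]

lemma transCell_id {y z c : B} {u' u : y ⟶ z} (ε₀ : u' ≅ u) {f : z ⟶ c} :
    transCell ε₀ (𝟙 (u ≫ f)) = 𝟙 (u' ≫ f) := by
  simp [transCell, ← comp_whiskerRight]

lemma isLift_refCell {a b c : B} {f g : a ⟶ b} {wm : b ⟶ c} {η : f ≫ wm ⟶ g ≫ wm}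
    {y : B} {u : y ⟶ a} {β : u ≫ f ⟶ u ≫ g} {x : B} (m : x ⟶ y)
    (hβ : IsLift f g wm η u β) : IsLift f g wm η (m ≫ u) (refCell m u β) := by
  unfold IsLift refCell at *
  simp [whisker_assoc, hβ]

lemma isLift_transCell {a b c : B} {f g : a ⟶ b} {wm : b ⟶ c} {η : f ≫ wm ⟶ g ≫ wm}
    {y : B} {u' u : y ⟶ a} (ε₀ : u' ≅ u) {β : u ≫ f ⟶ u ≫ g}
    (hβ : IsLift f g wm η u β) : IsLift f g wm η u' (transCell ε₀ β) := by
  unfold IsLift transCell at *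
  simp only [comp_whiskerRight, hβ, Category.assoc]
  rw [associator_naturality_left_assoc, ← whisker_exchange_assoc]
  simp [← comp_whiskerRight]

lemma isLift_comp {a b c : B} {f g k : a ⟶ b} {wm : b ⟶ c}
    {η : f ≫ wm ⟶ g ≫ wm} {θ : g ≫ wm ⟶ k ≫ wm}
    {y : B} {u : y ⟶ a} {β : u ≫ f ⟶ u ≫ g} {β' : u ≫ g ⟶ u ≫ k}
    (hβ : IsLift f g wm η u β) (hβ' : IsLift g k wm θ u β') :
    IsLift f k wm (η ≫ θ) u (β ≫ β') := by
  unfold IsLift at *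
  simp [hβ, hβ']

lemma isLift_id {a b c : B} (f : a ⟶ b) (wm : b ⟶ c) {y : B} (u : y ⟶ a) :
    IsLift f f wm (𝟙 (f ≫ wm)) u (𝟙 (u ≫ f)) := by
  unfold IsLift; simp

/-- From the compatibility part of [WB4]: a lift of the identity 2-cell becomes
the identity after a further refinement. -/
lemma exists_whisker_eq_id {W : WClass B} (h1 : W.WB1) (h4 : W.WB4)
    {a b c : B} (f : a ⟶ b) (wm : b ⟶ c) (hw : W wm)
    {x : B} (u : x ⟶ a) (γ : u ≫ f ⟶ u ≫ f) (hu : W u)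
    (hγ : IsLift f f wm (𝟙 (f ≫ wm)) u γ) :
    ∃ (y : B) (s : y ⟶ x), W (s ≫ u) ∧ refCell s u γ = 𝟙 ((s ≫ u) ≫ f) := by
  obtain ⟨d, s, t, hsu, htu, ε₀, heq⟩ :=
    h4.2 f f wm hw (𝟙 (f ≫ wm)) u γ hu hγ (𝟙 a) (𝟙 (𝟙 a ≫ f)) (h1 a) (isLift_id f wm (𝟙 a))
  refine ⟨d, s, hsu, ?_⟩
  have h2' : refCell s u γ ≫ ε₀.hom ▷ f = 𝟙 _ ≫ ε₀.hom ▷ f := by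
    simpa [refCell] using heq
  rwa [cancel_mono (ε₀.hom ▷ f)] at h2'

/-- Key lemma: an invertible 2-cell `η : f ≫ wm ≅ g ≫ wm` along `wm ∈ W` yields,
after a refinement `u ∈ W`, an invertible 2-cell `u ≫ f ≅ u ≫ g`. -/
lemma exists_iso_refinement (W : WClass B) (h1 : W.WB1) (h2 : W.WB2) (h3 : W.WB3)
    (h4 : W.WB4) (h5 : W.WB5) {a b c : B} (f g : a ⟶ b) (wm : b ⟶ c) (hw : W wm)
    (η : f ≫ wm ≅ g ≫ wm) :
    ∃ (x : B) (u : x ⟶ a), W u ∧ Nonempty (u ≫ f ≅ u ≫ g) := by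
  obtain ⟨x₁, u₁, hu₁, β₁, hβ₁⟩ := h4.1 f g wm hw η.hom
  obtain ⟨x₂, u₂, hu₂, β₂, hβ₂⟩ := h4.1 g f wm hw η.inv
  obtain ⟨e, k, l, hl, ⟨ψ⟩⟩ := h3 u₁ u₂ hu₁
  set r : e ⟶ a := k ≫ u₁ with hr
  have hγ₁ : IsLift f g wm η.hom r (refCell k u₁ β₁) := isLift_refCell k hβ₁
  have hγ₂ : IsLift g f wm η.inv r (transCell ψ (refCell l u₂ β₂)) :=
    isLift_transCell ψ (isLift_refCell l hβ₂)
  set γ₁ := refCell k u₁ β₁ with hγ₁def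
  set γ₂ := transCell ψ (refCell l u₂ β₂) with hγ₂def
  obtain ⟨e', m, hm⟩ := h2 l u₂ hl hu₂
  have hmr : W (m ≫ r) := h5 _ _ hm ⟨whiskerLeftIso m ψ⟩
  have hγ : IsLift f f wm (𝟙 (f ≫ wm)) (m ≫ r) (refCell m r (γ₁ ≫ γ₂)) := by
    have h := isLift_refCell m (isLift_comp hγ₁ hγ₂)
    rwa [Iso.hom_inv_id] at h
  have hδ : IsLift g g wm (𝟙 (g ≫ wm)) (m ≫ r) (refCell m r (γ₂ ≫ γ₁)) := by
    have h := isLift_refCell m (isLift_comp hγ₂ hγ₁)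
    rwa [Iso.inv_hom_id] at h
  obtain ⟨y₁, s, hs, hsγ⟩ := exists_whisker_eq_id h1 h4 f wm hw (m ≫ r) _ hmr hγ
  obtain ⟨y₂, t, ht, htδ⟩ := exists_whisker_eq_id h1 h4 g wm hw (m ≫ r) _ hmr hδ
  set A := refCell s (m ≫ r) (refCell m r γ₁) with hA
  set A' := refCell s (m ≫ r) (refCell m r γ₂) with hA'
  have hAA' : A ≫ A' = 𝟙 _ := by
    rw [hA, hA', ← refCell_comp, ← refCell_comp]; exact hsγ
  set Bc := refCell t (m ≫ r) (refCell m r γ₂) with hBc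
  set Bc' := refCell t (m ≫ r) (refCell m r γ₁) with hBc'
  have hBB' : Bc ≫ Bc' = 𝟙 _ := by
    rw [hBc, hBc', ← refCell_comp, ← refCell_comp]; exact htδ
  have hA_lift : IsLift f g wm η.hom (s ≫ (m ≫ r)) A :=
    isLift_refCell s (isLift_refCell m hγ₁)
  have hA'_lift : IsLift g f wm η.inv (s ≫ (m ≫ r)) A' :=
    isLift_refCell s (isLift_refCell m hγ₂)
  have hBc_lift : IsLift g f wm η.inv (t ≫ (m ≫ r)) Bc :=
    isLift_refCell t (isLift_refCell m hγ₂)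
  have hBc'_lift : IsLift f g wm η.hom (t ≫ (m ≫ r)) Bc' :=
    isLift_refCell t (isLift_refCell m hγ₁)
  obtain ⟨E, p, n, hn, ⟨χ⟩⟩ := h3 (s ≫ (m ≫ r)) (t ≫ (m ≫ r)) hs
  obtain ⟨E', m₂, hm₂⟩ := h2 n (t ≫ (m ≫ r)) hn ht
  set R₁ : E ⟶ a := p ≫ (s ≫ (m ≫ r)) with hR₁
  set R₂ : E ⟶ a := n ≫ (t ≫ (m ≫ r)) with hR₂
  have hT₁ : W (m₂ ≫ R₁) := h5 _ _ hm₂ ⟨whiskerLeftIso m₂ χ⟩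
  set T₁ : E' ⟶ a := m₂ ≫ R₁ with hT₁def
  set Ahat := refCell m₂ R₁ (refCell p (s ≫ (m ≫ r)) A) with hAhat
  set A'hat := refCell m₂ R₁ (refCell p (s ≫ (m ≫ r)) A') with hA'hat
  set Chat := refCell m₂ R₁ (transCell χ (refCell n (t ≫ (m ≫ r)) Bc)) with hChat
  set B'hat := refCell m₂ R₁ (transCell χ (refCell n (t ≫ (m ≫ r)) Bc')) with hB'hat
  have hAhatA' : Ahat ≫ A'hat = 𝟙 _ := by
    rw [hAhat, hA'hat, ← refCell_comp, ← refCell_comp, hAA', refCell_id, refCell_id]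
  have hChatB' : Chat ≫ B'hat = 𝟙 _ := by
    rw [hChat, hB'hat, ← refCell_comp, transCell_comp, ← refCell_comp, hBB',
      refCell_id, transCell_id, refCell_id]
  have hAhat_lift : IsLift f g wm η.hom T₁ Ahat :=
    isLift_refCell m₂ (isLift_refCell p hA_lift)
  have hB'hat_lift : IsLift f g wm η.hom T₁ B'hat :=
    isLift_refCell m₂ (isLift_transCell χ (isLift_refCell n hBc'_lift))
  obtain ⟨F, s₃, t₃, hs₃, ht₃, ε₂, heq₂⟩ :=
    h4.2 f g wm hw η.hom T₁ Ahat hT₁ hAhat_lift T₁ B'hat hT₁ hB'hat_lift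
  set M := refCell s₃ T₁ Ahat with hM
  set P := refCell s₃ T₁ A'hat with hP
  have hMP : M ≫ P = 𝟙 _ := by
    rw [hM, hP, ← refCell_comp, hAhatA', refCell_id]
  have heq₂' : M ≫ ε₂.hom ▷ g = ε₂.hom ▷ f ≫ refCell t₃ T₁ B'hat := by
    simpa [refCell, hM] using heq₂
  set Q := ε₂.hom ▷ g ≫ refCell t₃ T₁ Chat ≫ ε₂.inv ▷ f with hQ
  have hmid : refCell t₃ T₁ Chat ≫ refCell t₃ T₁ B'hat = 𝟙 _ := by
    rw [← refCell_comp, hChatB', refCell_id]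
  have hQM : Q ≫ M = 𝟙 _ := by
    have hM' : M = ε₂.hom ▷ f ≫ refCell t₃ T₁ B'hat ≫ ε₂.inv ▷ g := by
      rw [← Category.assoc, ← heq₂']
      simp [← comp_whiskerRight]
    calc Q ≫ M
        = ε₂.hom ▷ g ≫ (refCell t₃ T₁ Chat ≫ refCell t₃ T₁ B'hat) ≫ ε₂.inv ▷ g := by
          rw [hQ, hM']; simp [← comp_whiskerRight]
      _ = 𝟙 _ := by rw [hmid]; simp [← comp_whiskerRight]
  have hPQ : P = Q := by
    rw [← Category.id_comp P, ← hQM, Category.assoc, hMP, Category.comp_id]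
  have hPM : P ≫ M = 𝟙 _ := by rw [hPQ]; exact hQM
  exact ⟨F, s₃ ≫ T₁, hs₃, ⟨⟨M, P, hMP, hPM⟩⟩⟩

end WClass

theorem statement3 {B : Type u} [Bicategory.{w, v} B] (W : WClass B)
    (h1 : W.WB1) (h2 : W.WB2) (h3 : W.WB3) (h4 : W.WB4) (h5 : W.WB5)
    {A' B' C' : B} (a : B' ⟶ A') (bm : C' ⟶ B')
    (ha : W a) (hab : W (bm ≫ a)) :
    ∃ (D' : B) (cm : D' ⟶ C'), W (cm ≫ bm) := by
  obtain ⟨d, h, vm, hvm, ⟨φ⟩⟩ := h3 (bm ≫ a) a hab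
  obtain ⟨x, u, hu, ⟨I⟩⟩ := WClass.exists_iso_refinement W h1 h2 h3 h4 h5
    (h ≫ bm) vm a ha ((α_ h bm a) ≪≫ φ)
  obtain ⟨y, m, hm⟩ := h2 u vm hu hvm
  refine ⟨y, m ≫ u ≫ h, h5 _ _ hm ?_⟩
  exact ⟨(α_ m (u ≫ h) bm) ≪≫ whiskerLeftIso m ((α_ u h bm) ≪≫ I)⟩
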